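/- Let B be a unitary matrix on ℂⁿ, let T_B be the operator f ↦ (1/(2πi)) f′ with domain 𝒟_B = {f ∈ 𝒟_max : B f(α⃗) = f(β⃗)}, and let λ ∈ ℂ. The following are equivalent: (a) T_B − λI : 𝒟_B → L²(Ω) is surjective; (b) the matrix E(λβ⃗)⁻¹ B E(λα⃗) − I is surjective; (c) T_B − λI is injective; (d) the matrix E(λβ⃗)⁻¹ B E(λα⃗) − I is injective. -/

import Mathlib

open MeasureTheory Complex Filter Set

noncomputable section

/-- The union of the open intervals `(a i, b i)`. -/
def Omega {n : ℕ} (a b : Fin n → ℝ) : Set ℝ := ⋃ i, Set.Ioo (a i) (b i)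

/-- The endpoints are ordered: `a 0 < b 0 < a 1 < b 1 < … < a (n-1) < b (n-1)`. -/
def EndpointsOrdered {n : ℕ} (a b : Fin n → ℝ) : Prop :=
  (∀ i, a i < b i) ∧ ∀ i j : Fin n, i < j → b i < a j

/-- The constant `1 / (2 π i)`. -/
def mK : ℂ := 1 / (2 * (Real.pi : ℂ) * Complex.I)

/-- Smooth functions, compactly supported inside `Ω` (extended by zero to `ℝ`). -/
def IsCcSmooth {n : ℕ} (a b : Fin n → ℝ) (f : ℝ → ℂ) : Prop :=
  ContDiff ℝ ((⊤ : ℕ∞) : WithTop ℕ∞) f ∧ HasCompactSupport f ∧ tsupport f ⊆ Omega a b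

/-- `f` is a member of `𝒟_max`: it is absolutely continuous on each interval `(a i, b i)`
with a.e. derivative `g ∈ L²(Ω)` (expressed by the fundamental theorem of calculus on each
interval), and with boundary values `va i` at `a i` and `vb i` at `b i`. -/
structure MemDmax {n : ℕ} (a b : Fin n → ℝ) (f g : ℝ → ℂ) (va vb : Fin n → ℂ) : Prop where
  memL2 : MemLp f 2 (volume.restrict (Omega a b))
  derivL2 : MemLp g 2 (volume.restrict (Omega a b))
  ftc : ∀ i : Fin n, ∀ x ∈ Set.Ioo (a i) (b i), ∀ y ∈ Set.Ioo (a i) (b i),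
    f y - f x = ∫ t in x..y, g t
  lim_left : ∀ i : Fin n,
    Filter.Tendsto f (nhdsWithin (a i) (Set.Ioo (a i) (b i))) (nhds (va i))
  lim_right : ∀ i : Fin n,
    Filter.Tendsto f (nhdsWithin (b i) (Set.Ioo (a i) (b i))) (nhds (vb i))

/-- The inner product on `ℂⁿ`, linear in the first argument. -/
def cdot {n : ℕ} (u v : Fin n → ℂ) : ℂ := ∑ i, u i * star (v i)

/-- The exponential function `e_λ(x) = e^{2πiλx}`. -/
def eFun (l : ℝ) : ℝ → ℂ := fun x => Complex.exp (2 * (Real.pi : ℂ) * Complex.I * l * x)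

/-- The diagonal matrix `E(z)` with entries `e^{2πi z j}`. -/
def expDiag {n : ℕ} (z : Fin n → ℂ) : Matrix (Fin n) (Fin n) ℂ :=
  Matrix.diagonal fun i => Complex.exp (2 * (Real.pi : ℂ) * Complex.I * z i)

/-- `B` is a spectral boundary matrix: for every real `λ`, any solution `c` of
`B E(λ a⃗) c = E(λ b⃗) c` is a scalar multiple of `(1,…,1)`. -/
def IsSpectralBoundary {n : ℕ} (a b : Fin n → ℝ) (B : Matrix (Fin n) (Fin n) ℂ) : Prop :=
  ∀ (l : ℝ) (c : Fin n → ℂ),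
    B.mulVec ((expDiag fun i => (l : ℂ) * (a i)).mulVec c)
      = (expDiag fun i => (l : ℂ) * (b i)).mulVec c →
    ∃ t : ℂ, c = fun _ => t

/-- `B` restricts to a linear isometric isomorphism from `Bl` onto `Br` and vanishes
on the orthogonal complement of `Bl` (a partial isometry with initial space `Bl` and
final space `Br`). -/
def IsPartialIsometryOn {n : ℕ} (B : Matrix (Fin n) (Fin n) ℂ)
    (Bl Br : Submodule ℂ (Fin n → ℂ)) : Prop :=
  (∀ v ∈ Bl, cdot (B.mulVec v) (B.mulVec v) = cdot v v) ∧
  Submodule.map B.mulVecLin Bl = Br ∧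
  (∀ v : Fin n → ℂ, (∀ u ∈ Bl, cdot v u = 0) → B.mulVec v = 0)

/-- `Ω` is spectral with spectrum `Λ`: the exponentials `e_λ`, `λ ∈ Λ`, are pairwise
orthogonal in `L²(Ω)` and their closed linear span is all of `L²(Ω)`. -/
def IsSpectral {n : ℕ} (a b : Fin n → ℝ) (Λ : Set ℝ) : Prop :=
  (∀ l ∈ Λ, ∀ l' ∈ Λ, l ≠ l' →
      ∫ x in Omega a b, eFun l x * star (eFun l' x) = 0) ∧
  (Submodule.span ℂ {F : Lp ℂ 2 (volume.restrict (Omega a b)) |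
      ∃ l ∈ Λ, ⇑F =ᵐ[volume.restrict (Omega a b)] eFun l}).topologicalClosure = ⊤


def Kc : ℂ := 2 * Real.pi * Complex.I

lemma Kc_ne : Kc ≠ 0 := by
  simp [Kc, Real.pi_ne_zero, Complex.I_ne_zero, Complex.ofReal_ne_zero]

lemma isCompact_bound (ψ : ℝ → ℂ) (hψ : Continuous ψ) (x y : ℝ) :
    ∃ C : ℝ, ∀ t ∈ Set.Icc x y, ‖ψ t‖ ≤ C := by
  rcases le_or_gt x y with h | h
  · obtain ⟨C, hC⟩ := isCompact_Icc.exists_bound_of_continuousOn (hψ.continuousOn (s := Icc x y))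
    exact ⟨C, hC⟩
  · exact ⟨0, fun t ht => absurd (ht.1.trans ht.2) (not_le.mpr h)⟩

lemma ibp_aux (ψ ψ' ρ : ℝ → ℂ) (x y : ℝ) (hxy : x ≤ y)
    (hψ : ∀ t, HasDerivAt ψ (ψ' t) t) (hψc : Continuous ψ')
    (hρ : Integrable ρ) :
    ψ y * (∫ t in x..y, ρ t) =
      ∫ s in x..y, (ψ' s * (∫ t in x..s, ρ t) + ψ s * ρ s) := by
  have hψcont : Continuous ψ := by
    rw [continuous_iff_continuousAt]; exact fun t => (hψ t).continuousAt
  set u : ℝ → ℂ := fun s => ∫ t in x..s, ρ t with hu_def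
  have hu_cont : Continuous u :=
    intervalIntegral.continuous_primitive (fun a b => hρ.intervalIntegrable) x
  set v : ℝ → ℂ := fun s => ∫ r in x..s, ψ' r with hv_def
  have hv_cont : Continuous v :=
    intervalIntegral.continuous_primitive (fun a b => hψc.intervalIntegrable a b) x
  have hstep : ∀ s, ψ s = ψ x + v s := by
    intro s
    have h1 : v s = ψ s - ψ x :=
      intervalIntegral.integral_eq_sub_of_hasDerivAt (fun t _ => hψ t)
        (hψc.intervalIntegrable x s)
    rw [h1]; ring
  obtain ⟨C1, hC1⟩ := isCompact_bound ψ hψcont x y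
  obtain ⟨C2, hC2⟩ := isCompact_bound v hv_cont x y
  have hρμ : Integrable ρ (volume.restrict (Ioc x y)) := hρ.restrict
  have hψρ : Integrable (fun s => ψ s * ρ s) (volume.restrict (Ioc x y)) := by
    refine hρμ.bdd_mul (c := C1) hψcont.aestronglyMeasurable ?_
    filter_upwards [ae_restrict_mem measurableSet_Ioc] with s hs
    exact hC1 s ⟨hs.1.le, hs.2⟩
  have hvρ : Integrable (fun s => v s * ρ s) (volume.restrict (Ioc x y)) := by
    refine hρμ.bdd_mul (c := C2) hv_cont.aestronglyMeasurable ?_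
    filter_upwards [ae_restrict_mem measurableSet_Ioc] with s hs
    exact hC2 s ⟨hs.1.le, hs.2⟩
  have hψ'int : Integrable ψ' (volume.restrict (Ioc x y)) := hψc.integrableOn_Ioc
  have hψ'u : Integrable (fun r => ψ' r * u r) (volume.restrict (Ioc x y)) := (hψc.mul hu_cont).integrableOn_Ioc
  -- Step A : ∫ ψ ρ = ψ x * u y + T
  have hA : (∫ s in Ioc x y, ψ s * ρ s) =
      ψ x * u y + ∫ s in Ioc x y, v s * ρ s := by
    have h1 : ∀ s, ψ s * ρ s = ψ x * ρ s + v s * ρ s := by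
      intro s; rw [hstep s]; ring
    simp only [h1]
    rw [integral_add (hρμ.const_mul (ψ x)) hvρ, integral_const_mul]
    congr 1
    rw [hu_def]
    simp only
    rw [intervalIntegral.integral_of_le hxy]
  -- T as a double integral
  set F : ℝ → ℝ → ℂ := fun s r => (Ioc x s).indicator ψ' r * ρ s with hF_def
  have hT1 : (∫ s in Ioc x y, v s * ρ s) = ∫ s in Ioc x y, ∫ r in Ioc x y, F s r := by
    refine setIntegral_congr_fun measurableSet_Ioc (fun s hs => ?_)
    have hvs : v s = ∫ r in Ioc x y, (Ioc x s).indicator ψ' r := by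
      rw [hv_def]
      simp only
      rw [intervalIntegral.integral_of_le hs.1.le,
        MeasureTheory.integral_indicator measurableSet_Ioc,
        Measure.restrict_restrict measurableSet_Ioc,
        Set.inter_eq_self_of_subset_left (Set.Ioc_subset_Ioc_right hs.2)]
    rw [hvs, ← integral_mul_const]
  -- Fubini
  have hprod : ((volume.restrict (Ioc x y)).prod (volume.restrict (Ioc x y))) = (volume.prod volume).restrict ((Ioc x y) ×ˢ (Ioc x y)) := by
    rw [Measure.prod_restrict]
  have base : Integrable (fun q : ℝ × ℝ => ρ q.1 * ψ' q.2) (((volume.restrict (Ioc x y)).prod (volume.restrict (Ioc x y)))) :=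
    hρμ.mul_prod hψ'int
  have hH : Integrable
      (({q : ℝ × ℝ | q.2 ≤ q.1}).indicator (fun q => ρ q.1 * ψ' q.2)) (((volume.restrict (Ioc x y)).prod (volume.restrict (Ioc x y)))) :=
    base.indicator (measurableSet_le measurable_snd measurable_fst)
  have hae : ({q : ℝ × ℝ | q.2 ≤ q.1}).indicator (fun q => ρ q.1 * ψ' q.2)
      =ᵐ[((volume.restrict (Ioc x y)).prod (volume.restrict (Ioc x y)))] Function.uncurry F := by
    rw [hprod]
    filter_upwards [ae_restrict_mem (measurableSet_Ioc.prod measurableSet_Ioc)] with q hq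
    obtain ⟨hq1, hq2⟩ := hq
    by_cases h : q.2 ≤ q.1
    · rw [Set.indicator_of_mem (show q ∈ {q : ℝ × ℝ | q.2 ≤ q.1} from h)]
      have : q.2 ∈ Ioc x q.1 := ⟨hq2.1, h⟩
      simp only [Function.uncurry, hF_def, Set.indicator_of_mem this]
      ring
    · rw [Set.indicator_of_notMem (show q ∉ {q : ℝ × ℝ | q.2 ≤ q.1} from h)]
      have : q.2 ∉ Ioc x q.1 := fun hc => h hc.2
      simp only [Function.uncurry, hF_def, Set.indicator_of_notMem this]
      ring
  have hFint : Integrable (Function.uncurry F) (((volume.restrict (Ioc x y)).prod (volume.restrict (Ioc x y)))) := hH.congr hae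
  have hswap : (∫ s in Ioc x y, ∫ r in Ioc x y, F s r) =
      ∫ r in Ioc x y, ∫ s in Ioc x y, F s r := by
    exact MeasureTheory.integral_integral_swap hFint
  -- evaluate the inner integral
  have hinner : ∀ r ∈ Ioc x y, (∫ s in Ioc x y, F s r) = ψ' r * (u y - u r) := by
    intro r hr
    have hFs : ∀ s, F s r = ψ' r * (Ici r).indicator ρ s := by
      intro s
      by_cases h : r ≤ s
      · rw [hF_def]
        simp only
        rw [Set.indicator_of_mem (Set.mem_Ioc.mpr ⟨hr.1, h⟩),
          Set.indicator_of_mem (Set.mem_Ici.mpr h)]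
      · rw [hF_def]
        simp only
        rw [Set.indicator_of_notMem (fun hc => h hc.2),
          Set.indicator_of_notMem (fun hc => h (Set.mem_Ici.mp hc))]
        ring
    simp only [hFs]
    rw [integral_const_mul]
    congr 1
    rw [MeasureTheory.integral_indicator measurableSet_Ici,
      Measure.restrict_restrict measurableSet_Ici]
    have hset : Ici r ∩ Ioc x y = Icc r y := by
      ext s
      constructor
      · rintro ⟨h1, _, h3⟩; exact ⟨h1, h3⟩
      · rintro ⟨h1, h2⟩; exact ⟨h1, hr.1.trans_le h1, h2⟩
    rw [hset, MeasureTheory.integral_Icc_eq_integral_Ioc]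
    have hadj : (∫ t in x..r, ρ t) + ∫ t in r..y, ρ t = ∫ t in x..y, ρ t :=
      intervalIntegral.integral_add_adjacent_intervals (hρ.intervalIntegrable)
        (hρ.intervalIntegrable)
    have : (∫ t in Ioc r y, ρ t) = ∫ t in r..y, ρ t :=
      (intervalIntegral.integral_of_le hr.2).symm
    rw [this, hu_def]
    simp only
    rw [← hadj]
    ring
  have hT2 : (∫ s in Ioc x y, v s * ρ s) =
      (ψ y - ψ x) * u y - ∫ r in Ioc x y, ψ' r * u r := by
    rw [hT1, hswap, setIntegral_congr_fun measurableSet_Ioc hinner]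
    simp only [mul_sub]
    rw [integral_sub (hψ'int.mul_const (u y)) hψ'u, integral_mul_const]
    have : (∫ r in Ioc x y, ψ' r) = v y := by
      rw [hv_def]; simp only; rw [intervalIntegral.integral_of_le hxy]
    rw [this]
    have : v y = ψ y - ψ x := by have := hstep y; rw [this]; ring
    rw [this]
  -- assemble
  show ψ y * u y = ∫ s in x..y, (ψ' s * u s + ψ s * ρ s)
  rw [intervalIntegral.integral_of_le hxy,
    integral_add hψ'u hψρ, hA, hT2]
  ring

lemma ibp_full (ψ ψ' ρ : ℝ → ℂ) (α : ℝ) (C : ℂ)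
    (hψ : ∀ t, HasDerivAt ψ (ψ' t) t) (hψc : Continuous ψ')
    (hρ : Integrable ρ) (x y : ℝ) :
    ψ y * (C + ∫ t in α..y, ρ t) - ψ x * (C + ∫ t in α..x, ρ t)
      = ∫ s in x..y, (ψ' s * (C + ∫ t in α..s, ρ t) + ψ s * ρ s) := by
  have hψcont : Continuous ψ := by
    rw [continuous_iff_continuousAt]; exact fun t => (hψ t).continuousAt
  have key : ∀ x y : ℝ, x ≤ y →
      ψ y * (C + ∫ t in α..y, ρ t) - ψ x * (C + ∫ t in α..x, ρ t)
        = ∫ s in x..y, (ψ' s * (C + ∫ t in α..s, ρ t) + ψ s * ρ s) := by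
    intro x y hxy
    have hadj : ∀ s : ℝ,
        (C + ∫ t in α..s, ρ t) = (C + ∫ t in α..x, ρ t) + ∫ t in x..s, ρ t := by
      intro s
      have h := intervalIntegral.integral_add_adjacent_intervals
        (hρ.intervalIntegrable (a := α) (b := x)) (hρ.intervalIntegrable (a := x) (b := s))
      rw [← h]; ring
    have hψx : ψ y - ψ x = ∫ s in x..y, ψ' s :=
      (intervalIntegral.integral_eq_sub_of_hasDerivAt (fun t _ => hψ t)
        (hψc.intervalIntegrable x y)).symm
    have hucont : Continuous (fun s => ∫ t in x..s, ρ t) :=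
      intervalIntegral.continuous_primitive (fun a b => hρ.intervalIntegrable) x
    have hint1 : IntervalIntegrable (fun s => ψ' s * (C + ∫ t in α..x, ρ t)) volume x y :=
      (hψc.mul continuous_const).intervalIntegrable x y
    have hint2 : IntervalIntegrable (fun s => ψ' s * ∫ t in x..s, ρ t) volume x y :=
      (hψc.mul hucont).intervalIntegrable x y
    have hψρint : IntervalIntegrable (fun s => ψ s * ρ s) volume x y := by
      have := (hρ.intervalIntegrable (a := x) (b := y)).continuousOn_mul
        (hψcont.continuousOn (s := Set.uIcc x y))
      exact this
    have hre : ∀ s : ℝ, ψ' s * (C + ∫ t in α..s, ρ t) + ψ s * ρ s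
        = ψ' s * (C + ∫ t in α..x, ρ t) + (ψ' s * (∫ t in x..s, ρ t) + ψ s * ρ s) := by
      intro s; rw [hadj s]; ring
    rw [intervalIntegral.integral_congr (g :=
      fun s => ψ' s * (C + ∫ t in α..x, ρ t) + (ψ' s * (∫ t in x..s, ρ t) + ψ s * ρ s))
      (fun s _ => hre s)]
    rw [intervalIntegral.integral_add hint1 (hint2.add hψρint)]
    rw [intervalIntegral.integral_mul_const]
    rw [← ibp_aux ψ ψ' ρ x y hxy hψ hψc hρ, ← hψx]
    rw [hadj y, hadj x]
    rw [intervalIntegral.integral_same]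
    ring
  rcases le_total x y with h | h
  · exact key x y h
  · have hk := key y x h
    rw [intervalIntegral.integral_symm x y] at hk
    linear_combination -hk

lemma exp_hasDerivAt (c : ℂ) (t : ℝ) :
    HasDerivAt (fun s : ℝ => Complex.exp (c * s)) (c * Complex.exp (c * t)) t := by
  have h0 : HasDerivAt (fun s : ℝ => (s : ℂ)) 1 t := by
    exact Complex.ofRealCLM.hasDerivAt (x := t)
  have h1 : HasDerivAt (fun s : ℝ => c * s) c t := by simpa using h0.const_mul c
  simpa [mul_comm] using h1.cexp

lemma exp_cont (c : ℂ) : Continuous fun s : ℝ => Complex.exp (c * s) :=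
  Complex.continuous_exp.comp (continuous_const.mul Complex.continuous_ofReal)


-- ==== Omega lemmas ====
section OmegaFacts

variable {n : ℕ} {a b : Fin n → ℝ}

lemma measurableSet_Omega : MeasurableSet (Omega a b) :=
  MeasurableSet.iUnion fun i => measurableSet_Ioo

lemma vol_Omega_lt : volume (Omega a b) < ⊤ := by
  refine lt_of_le_of_lt (measure_iUnion_le _) ?_
  rw [tsum_fintype]
  refine ENNReal.sum_lt_top.mpr fun i _ => ?_
  rw [Real.volume_Ioo]
  exact ENNReal.ofReal_lt_top

lemma finiteOmega : IsFiniteMeasure (volume.restrict (Omega a b)) :=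
  ⟨by rw [Measure.restrict_apply_univ]; exact vol_Omega_lt⟩

lemma Ioo_subset_Omega (i : Fin n) : Set.Ioo (a i) (b i) ⊆ Omega a b :=
  Set.subset_iUnion (fun i => Set.Ioo (a i) (b i)) i

lemma restrict_Ioo_eq (i : Fin n) :
    (volume.restrict (Omega a b)).restrict (Set.Ioo (a i) (b i))
      = volume.restrict (Set.Ioo (a i) (b i)) := by
  rw [Measure.restrict_restrict measurableSet_Ioo,
    Set.inter_eq_self_of_subset_left (Ioo_subset_Omega i)]

lemma ae_Omega_to_Ioo {p : ℝ → Prop} (hae : ∀ᵐ x ∂volume.restrict (Omega a b), p x)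
    (i : Fin n) : ∀ᵐ x ∂volume.restrict (Set.Ioo (a i) (b i)), p x := by
  rw [← restrict_Ioo_eq i]; exact ae_restrict_of_ae hae

lemma Ioo_disj (hab : EndpointsOrdered a b) {i j : Fin n} (hij : i ≠ j) {x : ℝ}
    (hx : x ∈ Set.Ioo (a i) (b i)) (hy : x ∈ Set.Ioo (a j) (b j)) : False := by
  rcases lt_or_gt_of_ne hij with h | h
  · exact absurd (hx.2.trans ((hab.2 i j h).trans hy.1)) (lt_irrefl x)
  · exact absurd (hy.2.trans ((hab.2 j i h).trans hx.1)) (lt_irrefl x)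

lemma sum_indicator_eq (hab : EndpointsOrdered a b) (h : Fin n → ℝ → ℂ) {j : Fin n} {x : ℝ}
    (hx : x ∈ Set.Ioo (a j) (b j)) :
    (∑ i, (Set.Ioo (a i) (b i)).indicator (h i) x) = h j x := by
  rw [Finset.sum_eq_single j]
  · exact Set.indicator_of_mem hx _
  · intro i _ hij
    exact Set.indicator_of_notMem (fun hc => Ioo_disj hab hij hc hx) _
  · exact fun hc => absurd (Finset.mem_univ j) hc

lemma memL2_indicator_sum (hab : EndpointsOrdered a b) (h : Fin n → ℝ → ℂ)
    (hc : ∀ i, Continuous (h i)) :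
    MemLp (fun x => ∑ i, (Set.Ioo (a i) (b i)).indicator (h i) x) 2
      (volume.restrict (Omega a b)) := by
  haveI := finiteOmega (a := a) (b := b)
  have hmeas : AEStronglyMeasurable (fun x => ∑ i, (Set.Ioo (a i) (b i)).indicator (h i) x)
      (volume.restrict (Omega a b)) := by
    refine (Finset.stronglyMeasurable_fun_sum Finset.univ (fun i _ => ?_)).aestronglyMeasurable
    exact (hc i).stronglyMeasurable.indicator measurableSet_Ioo
  choose C hC using fun i => isCompact_bound (h i) (hc i) (a i) (b i)
  refine MemLp.of_bound hmeas (∑ i, C i) (Filter.Eventually.of_forall fun x => ?_)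
  refine le_trans (norm_sum_le _ _) (Finset.sum_le_sum fun i _ => ?_)
  by_cases hx : x ∈ Set.Ioo (a i) (b i)
  · rw [Set.indicator_of_mem hx]
    exact hC i x ⟨hx.1.le, hx.2.le⟩
  · rw [Set.indicator_of_notMem hx]
    simp only [norm_zero]
    exact le_trans (norm_nonneg _) (hC i (a i) ⟨le_refl _, (hab.1 i).le⟩)

end OmegaFacts

-- ==== the per-interval data ====

def rho {n : ℕ} (a b : Fin n → ℝ) (l : ℂ) (G : ℝ → ℂ) (i : Fin n) : ℝ → ℂ :=
  fun t => Kc * Complex.exp (-(Kc * l) * t) * ((Set.Ioo (a i) (b i)).indicator G t)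

def dVec {n : ℕ} (a b : Fin n → ℝ) (l : ℂ) (G : ℝ → ℂ) : Fin n → ℂ :=
  fun i => ∫ t in (a i)..(b i), rho a b l G i t

section Data

variable {n : ℕ} {a b : Fin n → ℝ} {l : ℂ} {G : ℝ → ℂ}

lemma finiteIoo (i : Fin n) : IsFiniteMeasure (volume.restrict (Set.Ioo (a i) (b i))) :=
  ⟨by rw [Measure.restrict_apply_univ, Real.volume_Ioo]; exact ENNReal.ofReal_lt_top⟩

lemma integrableOn_of_L2 (hG : MemLp G 2 (volume.restrict (Omega a b))) (i : Fin n) :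
    IntegrableOn G (Set.Ioo (a i) (b i)) volume := by
  have h := hG.restrict (s := Set.Ioo (a i) (b i))
  rw [restrict_Ioo_eq] at h
  haveI := finiteIoo (a := a) (b := b) i
  exact h.integrable one_le_two

lemma integrableOn_Omega_of_L2 (hG : MemLp G 2 (volume.restrict (Omega a b))) :
    IntegrableOn G (Omega a b) volume := by
  haveI := finiteOmega (a := a) (b := b)
  exact hG.integrable one_le_two

lemma integrable_rho (hG : MemLp G 2 (volume.restrict (Omega a b))) (i : Fin n) :
    Integrable (rho a b l G i) volume := by
  have h1 : IntegrableOn G (Set.Ioo (a i) (b i)) volume := integrableOn_of_L2 hG i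
  have h2 : rho a b l G i = (Set.Ioo (a i) (b i)).indicator
      (fun t => Kc * Complex.exp (-(Kc * l) * t) * G t) := by
    funext t
    by_cases ht : t ∈ Set.Ioo (a i) (b i)
    · rw [rho, Set.indicator_of_mem ht, Set.indicator_of_mem ht]
    · rw [rho, Set.indicator_of_notMem ht, Set.indicator_of_notMem ht, mul_zero]
  rw [h2, integrable_indicator_iff measurableSet_Ioo]
  obtain ⟨C, hC⟩ := isCompact_bound (fun t => Kc * Complex.exp (-(Kc * l) * t))
    (continuous_const.mul (exp_cont _)) (a i) (b i)
  refine Integrable.bdd_mul (c := C) h1 ((continuous_const.mul (exp_cont _)).aestronglyMeasurable) ?_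
  filter_upwards [ae_restrict_mem measurableSet_Ioo] with t ht
  exact hC t ⟨ht.1.le, ht.2.le⟩

lemma mK_mul_Kc : mK * Kc = 1 := by
  rw [mK, Kc]
  have h : (2 : ℂ) * Real.pi * Complex.I ≠ 0 := by
    simpa [Kc] using Kc_ne
  field_simp

lemma exp_mul_exp_neg (z : ℂ) : Complex.exp z * Complex.exp (-z) = 1 := by
  rw [← Complex.exp_add, add_neg_cancel, Complex.exp_zero]

end Data

-- ==== existence of solutions ====

lemma exists_sol {n : ℕ} {a b : Fin n → ℝ} (hab : EndpointsOrdered a b) (l : ℂ)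
    {G : ℝ → ℂ} (hG : MemLp G 2 (volume.restrict (Omega a b))) (c : Fin n → ℂ) :
    ∃ f g : ℝ → ℂ,
      MemDmax a b f g (fun i => Complex.exp (Kc * l * (a i)) * c i)
        (fun i => Complex.exp (Kc * l * (b i)) * (c i + dVec a b l G i)) ∧
      (fun x => mK * g x - l * f x) =ᵐ[volume.restrict (Omega a b)] G := by
  set fi : Fin n → ℝ → ℂ := fun i y =>
    Complex.exp (Kc * l * y) * (c i + ∫ t in (a i)..y, rho a b l G i t) with hfi_def
  have hficont : ∀ i, Continuous (fi i) := fun i =>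
    (exp_cont _).mul (continuous_const.add
      (intervalIntegral.continuous_primitive
        (fun _ _ => (integrable_rho hG i).intervalIntegrable) (a i)))
  set f : ℝ → ℂ := fun x => ∑ i, (Set.Ioo (a i) (b i)).indicator (fi i) x with hf_def
  set g : ℝ → ℂ := fun x => Kc * l * f x + Kc * (Omega a b).indicator G x with hg_def
  have hf_eq : ∀ (j : Fin n) (x : ℝ), x ∈ Set.Ioo (a j) (b j) → f x = fi j x :=
    fun j x hx => sum_indicator_eq hab fi hx
  have hmemf : MemLp f 2 (volume.restrict (Omega a b)) :=
    memL2_indicator_sum hab fi hficont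
  have hindG : ((Omega a b).indicator G) =ᵐ[volume.restrict (Omega a b)] G := by
    filter_upwards [ae_restrict_mem measurableSet_Omega] with x hx
    exact Set.indicator_of_mem hx _
  have hmemg : MemLp g 2 (volume.restrict (Omega a b)) := by
    refine MemLp.add ?_ ?_
    · exact hmemf.const_mul (Kc * l)
    · exact (MemLp.ae_eq hindG.symm hG).const_mul Kc
  refine ⟨f, g, ⟨hmemf, hmemg, ?_, ?_, ?_⟩, ?_⟩
  · -- ftc
    intro i x hx y hy
    have key := ibp_full (fun s => Complex.exp (Kc * l * s))
      (fun s => Kc * l * Complex.exp (Kc * l * s)) (rho a b l G i) (a i) (c i)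
      (exp_hasDerivAt (Kc * l)) (continuous_const.mul (exp_cont _))
      (integrable_rho hG i) x y
    have hsub : Set.uIcc x y ⊆ Set.Ioo (a i) (b i) :=
      Set.ordConnected_Ioo.uIcc_subset hx hy
    have hcongr : ∀ s ∈ Set.uIcc x y,
        (Kc * l * Complex.exp (Kc * l * s) * (c i + ∫ t in (a i)..s, rho a b l G i t)
          + Complex.exp (Kc * l * s) * rho a b l G i s) = g s := by
      intro s hs
      have hsIoo := hsub hs
      have h1 : f s = fi i s := hf_eq i s hsIoo
      have h2 : (Omega a b).indicator G s = G s :=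
        Set.indicator_of_mem (Ioo_subset_Omega i hsIoo) _
      have h3 : rho a b l G i s = Kc * Complex.exp (-(Kc * l) * s) * G s := by
        rw [rho, Set.indicator_of_mem hsIoo]
      have h4 : Complex.exp (Kc * l * s) * Complex.exp (-(Kc * l) * s) = 1 := by
        have := exp_mul_exp_neg (Kc * l * s)
        rw [neg_mul]
        exact this
      rw [hg_def]
      simp only
      rw [h1, h2, h3, hfi_def]
      simp only
      linear_combination Kc * G s * h4
    rw [hf_eq i x hx, hf_eq i y hy, hfi_def]
    simp only
    rw [key]
    exact intervalIntegral.integral_congr hcongr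
  · -- lim_left
    intro i
    have hlim : Filter.Tendsto (fi i) (nhdsWithin (a i) (Set.Ioo (a i) (b i)))
        (nhds (fi i (a i))) :=
      ((hficont i).continuousAt.tendsto).mono_left nhdsWithin_le_nhds
    have hval : fi i (a i) = Complex.exp (Kc * l * (a i)) * c i := by
      rw [hfi_def]
      simp only
      rw [intervalIntegral.integral_same, add_zero]
    rw [← hval]
    refine hlim.congr' ?_
    filter_upwards [self_mem_nhdsWithin] with x hx
    exact (hf_eq i x hx).symm
  · -- lim_right
    intro i
    have hlim : Filter.Tendsto (fi i) (nhdsWithin (b i) (Set.Ioo (a i) (b i)))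
        (nhds (fi i (b i))) :=
      ((hficont i).continuousAt.tendsto).mono_left nhdsWithin_le_nhds
    have hval : fi i (b i) = Complex.exp (Kc * l * (b i)) * (c i + dVec a b l G i) := rfl
    rw [← hval]
    refine hlim.congr' ?_
    filter_upwards [self_mem_nhdsWithin] with x hx
    exact (hf_eq i x hx).symm
  · -- a.e. identity
    filter_upwards [ae_restrict_mem measurableSet_Omega] with x hx
    show mK * g x - l * f x = G x
    rw [hg_def]
    simp only
    rw [Set.indicator_of_mem hx]
    linear_combination (l * f x + G x) * mK_mul_Kc

-- ==== uniqueness / structure of solutions ====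

lemma sol_unique {n : ℕ} {a b : Fin n → ℝ} (hab : EndpointsOrdered a b) {l : ℂ}
    {G f g : ℝ → ℂ} {fa fb : Fin n → ℂ}
    (hG : MemLp G 2 (volume.restrict (Omega a b)))
    (hf : MemDmax a b f g fa fb)
    (hae : (fun x => mK * g x - l * f x) =ᵐ[volume.restrict (Omega a b)] G) (i : Fin n) :
    (∀ y ∈ Set.Ioo (a i) (b i),
      f y = Complex.exp (Kc * l * y) *
        (Complex.exp (-(Kc * l) * (a i)) * fa i + ∫ t in (a i)..y, rho a b l G i t)) ∧
    fb i = Complex.exp (Kc * l * (b i)) *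
      (Complex.exp (-(Kc * l) * (a i)) * fa i + dVec a b l G i) := by
  have hαβ : a i < b i := hab.1 i
  have hfInt : IntegrableOn f (Set.Ioo (a i) (b i)) volume :=
    integrableOn_of_L2 (G := f) hf.memL2 i
  have hGInt : IntegrableOn G (Set.Ioo (a i) (b i)) volume := integrableOn_of_L2 hG i
  have hae_i : ∀ᵐ t ∂volume.restrict (Set.Ioo (a i) (b i)),
      g t = Kc * l * f t + Kc * G t := by
    have h0 : ∀ᵐ x ∂volume.restrict (Set.Ioo (a i) (b i)), mK * g x - l * f x = G x :=
      ae_Omega_to_Ioo hae i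
    filter_upwards [h0] with t ht
    linear_combination Kc * ht - g t * mK_mul_Kc
  set gh : ℝ → ℂ := (Set.Ioo (a i) (b i)).indicator (fun t => Kc * l * f t + Kc * G t)
    with hgh_def
  have hghInt : Integrable gh volume := by
    rw [hgh_def, integrable_indicator_iff measurableSet_Ioo]
    exact (hfInt.const_mul (Kc * l)).add (hGInt.const_mul Kc)
  have hstep : ∀ x ∈ Set.Ioo (a i) (b i), ∀ y ∈ Set.Ioo (a i) (b i),
      f y - f x = ∫ t in x..y, gh t := by
    intro x hx y hy
    rw [hf.ftc i x hx y hy]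
    refine intervalIntegral.integral_congr_ae ?_
    have h1 : ∀ᵐ t ∂(volume : Measure ℝ), t ∈ Set.Ioo (a i) (b i) →
        g t = Kc * l * f t + Kc * G t := (ae_restrict_iff' measurableSet_Ioo).mp hae_i
    filter_upwards [h1] with t ht htm
    have hsub : Set.uIoc x y ⊆ Set.Ioo (a i) (b i) :=
      Set.Ioc_subset_Icc_self.trans (Set.ordConnected_Ioo.uIcc_subset hx hy)
    have htIoo := hsub htm
    rw [ht htIoo, hgh_def, Set.indicator_of_mem htIoo]
  have hρInt : Integrable (rho a b l G i) volume := integrable_rho hG i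
  set U : ℝ → ℂ := fun s => ∫ t in (a i)..s, rho a b l G i t with hU_def
  have hUcont : Continuous U :=
    intervalIntegral.continuous_primitive (fun _ _ => hρInt.intervalIntegrable) (a i)
  -- main identity on the interval
  have claim1 : ∀ x ∈ Set.Ioo (a i) (b i), ∀ y ∈ Set.Ioo (a i) (b i),
      Complex.exp (-(Kc * l) * y) * f y - Complex.exp (-(Kc * l) * x) * f x
        = ∫ t in x..y, rho a b l G i t := by
    intro x hx y hy
    have key := ibp_full (fun s => Complex.exp (-(Kc * l) * s))
      (fun s => -(Kc * l) * Complex.exp (-(Kc * l) * s)) gh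
      ((a i + b i) / 2) (f ((a i + b i) / 2))
      (exp_hasDerivAt (-(Kc * l))) (continuous_const.mul (exp_cont _)) hghInt x y
    have hx0 : (a i + b i) / 2 ∈ Set.Ioo (a i) (b i) := ⟨by linarith, by linarith⟩
    have hFs : ∀ s ∈ Set.Ioo (a i) (b i),
        f ((a i + b i) / 2) + (∫ t in ((a i + b i) / 2)..s, gh t) = f s := by
      intro s hs
      rw [← hstep _ hx0 s hs]; ring
    rw [hFs x hx, hFs y hy] at key
    rw [key]
    refine intervalIntegral.integral_congr (fun s hs => ?_)
    have hsIoo : s ∈ Set.Ioo (a i) (b i) := Set.ordConnected_Ioo.uIcc_subset hx hy hs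
    rw [hFs s hsIoo, hgh_def, Set.indicator_of_mem hsIoo,
      rho, Set.indicator_of_mem hsIoo]
    ring
  haveI hNBa : (nhdsWithin (a i) (Set.Ioo (a i) (b i))).NeBot := by
    refine mem_closure_iff_nhdsWithin_neBot.mp ?_
    rw [closure_Ioo (ne_of_lt hαβ)]
    exact ⟨le_refl _, hαβ.le⟩
  haveI hNBb : (nhdsWithin (b i) (Set.Ioo (a i) (b i))).NeBot := by
    refine mem_closure_iff_nhdsWithin_neBot.mp ?_
    rw [closure_Ioo (ne_of_lt hαβ)]
    exact ⟨hαβ.le, le_refl _⟩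
  have claim2 : ∀ y ∈ Set.Ioo (a i) (b i),
      f y = Complex.exp (Kc * l * y) *
        (Complex.exp (-(Kc * l) * (a i)) * fa i + U y) := by
    intro y hy
    have T1 : Filter.Tendsto (fun x : ℝ => Complex.exp (-(Kc * l) * x) * f x)
        (nhdsWithin (a i) (Set.Ioo (a i) (b i)))
        (nhds (Complex.exp (-(Kc * l) * (a i)) * fa i)) :=
      Filter.Tendsto.mul ((exp_cont (-(Kc * l))).continuousAt.tendsto.mono_left
        nhdsWithin_le_nhds) (hf.lim_left i)
    have hadj : ∀ x : ℝ, (∫ t in x..y, rho a b l G i t) = U y - U x := by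
      intro x
      have h := intervalIntegral.integral_add_adjacent_intervals
        (hρInt.intervalIntegrable (a := a i) (b := x))
        (hρInt.intervalIntegrable (a := x) (b := y))
      rw [hU_def]
      simp only
      rw [← h]; ring
    have T2 : Filter.Tendsto
        (fun x : ℝ => Complex.exp (-(Kc * l) * y) * f y - (U y - U x))
        (nhdsWithin (a i) (Set.Ioo (a i) (b i)))
        (nhds (Complex.exp (-(Kc * l) * y) * f y - (U y - U (a i)))) := by
      refine Filter.Tendsto.sub tendsto_const_nhds ?_
      exact Filter.Tendsto.sub tendsto_const_nhds
        (hUcont.continuousAt.tendsto.mono_left nhdsWithin_le_nhds)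
    have heq : (fun x : ℝ => Complex.exp (-(Kc * l) * x) * f x)
        =ᶠ[nhdsWithin (a i) (Set.Ioo (a i) (b i))]
        (fun x : ℝ => Complex.exp (-(Kc * l) * y) * f y - (U y - U x)) := by
      filter_upwards [self_mem_nhdsWithin] with x hx
      have := claim1 x hx y hy
      rw [hadj x] at this
      linear_combination -this
    have hU0 : U (a i) = 0 := intervalIntegral.integral_same
    have huniq := tendsto_nhds_unique (T2.congr' heq.symm) T1
    rw [hU0, sub_zero] at huniq
    have h4 : Complex.exp (Kc * l * y) * Complex.exp (-(Kc * l) * y) = 1 := by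
      rw [neg_mul]; exact exp_mul_exp_neg (Kc * l * y)
    linear_combination Complex.exp (Kc * l * ↑y) * huniq - f y * h4
  refine ⟨claim2, ?_⟩
  -- endpoint value at b i
  have T1 : Filter.Tendsto f (nhdsWithin (b i) (Set.Ioo (a i) (b i))) (nhds (fb i)) :=
    hf.lim_right i
  have T2 : Filter.Tendsto
      (fun y : ℝ => Complex.exp (Kc * l * y) *
        (Complex.exp (-(Kc * l) * (a i)) * fa i + U y))
      (nhdsWithin (b i) (Set.Ioo (a i) (b i)))
      (nhds (Complex.exp (Kc * l * (b i)) *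
        (Complex.exp (-(Kc * l) * (a i)) * fa i + U (b i)))) := by
    refine Filter.Tendsto.mul ((exp_cont (Kc * l)).continuousAt.tendsto.mono_left
      nhdsWithin_le_nhds) ?_
    exact Filter.Tendsto.add tendsto_const_nhds
      (hUcont.continuousAt.tendsto.mono_left nhdsWithin_le_nhds)
  have heq : f =ᶠ[nhdsWithin (b i) (Set.Ioo (a i) (b i))]
      (fun y : ℝ => Complex.exp (Kc * l * y) *
        (Complex.exp (-(Kc * l) * (a i)) * fa i + U y)) := by
    filter_upwards [self_mem_nhdsWithin] with y hy
    exact claim2 y hy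
  exact tendsto_nhds_unique (T1.congr' heq) T2

-- ==== matrix boundary condition ====

lemma expDiag_mulVec {n : ℕ} (z : Fin n → ℂ) (v : Fin n → ℂ) :
    (expDiag z).mulVec v = fun i => Complex.exp (2 * Real.pi * Complex.I * z i) * v i := by
  funext i; rw [expDiag, Matrix.mulVec_diagonal]

lemma expDiag_det_isUnit {n : ℕ} (z : Fin n → ℂ) : IsUnit (expDiag z).det := by
  rw [expDiag, Matrix.det_diagonal]
  exact (Finset.prod_ne_zero_iff.mpr fun i _ => Complex.exp_ne_zero _).isUnit

lemma matrix_bc {n : ℕ} (a b : Fin n → ℝ) (B : Matrix (Fin n) (Fin n) ℂ) (l : ℂ)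
    (c d : Fin n → ℂ) :
    B.mulVec (fun i => Complex.exp (Kc * l * (a i)) * c i)
        = (fun i => Complex.exp (Kc * l * (b i)) * (c i + d i)) ↔
      ((expDiag fun i => l * (b i))⁻¹ * B * (expDiag fun i => l * (a i)) - 1).mulVec c = d := by
  set Ea := expDiag fun i => l * (b i)⁻¹ with hEa0 -- dummy
  clear hEa0 Ea
  have hfa : (expDiag fun i => l * (a i)).mulVec c
      = fun i => Complex.exp (Kc * l * (a i)) * c i := by
    rw [expDiag_mulVec]
    funext i; congr 2; rw [Kc]; ring
  have hfb : (expDiag fun i => l * (b i)).mulVec (c + d)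
      = fun i => Complex.exp (Kc * l * (b i)) * (c i + d i) := by
    rw [expDiag_mulVec]
    funext i; rw [Pi.add_apply]; congr 2; rw [Kc]; ring
  have hdet : IsUnit (expDiag fun i => l * (b i)).det := expDiag_det_isUnit _
  have hmul : ∀ w : Fin n → ℂ,
      (expDiag fun i => l * (b i)).mulVec ((expDiag fun i => l * (b i))⁻¹.mulVec w) = w := by
    intro w; rw [Matrix.mulVec_mulVec, Matrix.mul_nonsing_inv _ hdet, Matrix.one_mulVec]
  have hmul' : ∀ w : Fin n → ℂ,
      (expDiag fun i => l * (b i))⁻¹.mulVec ((expDiag fun i => l * (b i)).mulVec w) = w := by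
    intro w; rw [Matrix.mulVec_mulVec, Matrix.nonsing_inv_mul _ hdet, Matrix.one_mulVec]
  have hM : ((expDiag fun i => l * (b i))⁻¹ * B * (expDiag fun i => l * (a i)) - 1).mulVec c
      = (expDiag fun i => l * (b i))⁻¹.mulVec
          (B.mulVec ((expDiag fun i => l * (a i)).mulVec c)) - c := by
    rw [Matrix.sub_mulVec, Matrix.one_mulVec, ← Matrix.mulVec_mulVec, ← Matrix.mulVec_mulVec]
  rw [hM, hfa, ← hfb]
  constructor
  · intro h
    rw [h, hmul']
    funext i; simp only [Pi.sub_apply, Pi.add_apply]; ring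
  · intro h
    have h2 : (expDiag fun i => l * (b i))⁻¹.mulVec
        (B.mulVec (fun i => Complex.exp (Kc * l * (a i)) * c i)) = c + d := by
      have := sub_eq_iff_eq_add.mp h
      rw [this]; funext i; simp only [Pi.add_apply]; ring
    rw [← hmul (B.mulVec (fun i => Complex.exp (Kc * l * (a i)) * c i)), h2]

lemma surj_iff_inj {n : ℕ} (M : Matrix (Fin n) (Fin n) ℂ) :
    Function.Surjective M.mulVec ↔ Function.Injective M.mulVec := by
  have h : M.mulVec = ⇑M.mulVecLin := by funext v; rfl
  rw [h]
  exact LinearMap.injective_iff_surjective.symm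

-- ==== zero data ====

lemma rho_zero {n : ℕ} (a b : Fin n → ℝ) (l : ℂ) (i : Fin n) (t : ℝ) :
    rho a b l (fun _ => 0) i t = 0 := by
  by_cases h : t ∈ Set.Ioo (a i) (b i)
  · rw [rho, Set.indicator_of_mem h, mul_zero]
  · rw [rho, Set.indicator_of_notMem h, mul_zero]

lemma dVec_zero {n : ℕ} (a b : Fin n → ℝ) (l : ℂ) (i : Fin n) :
    dVec a b l (fun _ => 0) i = 0 := by
  rw [dVec]
  rw [intervalIntegral.integral_congr (g := fun _ => (0 : ℂ))
    (fun t _ => rho_zero a b l i t)]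
  simp

lemma exp_cancel_left (z : ℂ) (w : ℂ) : Complex.exp z * (Complex.exp (-z) * w) = w := by
  rw [← mul_assoc, exp_mul_exp_neg, one_mul]

lemma exp_cancel_left' (z w : ℂ) : Complex.exp (-z) * (Complex.exp z * w) = w := by
  rw [← mul_assoc, mul_comm (Complex.exp (-z)), exp_mul_exp_neg, one_mul]


/-- for unitary `B` and `λ ∈ ℂ`, surjectivity/injectivity of `T_B - λI`
are each equivalent to surjectivity/injectivity of the matrix `E(λβ⃗)⁻¹ B E(λα⃗) - I`. -/
theorem stmt_10 (n : ℕ) (a b : Fin n → ℝ) (hab : EndpointsOrdered a b)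
    (B : Matrix (Fin n) (Fin n) ℂ)
    (hB : B.conjTranspose * B = 1 ∧ B * B.conjTranspose = 1) (l : ℂ) :
    (((∀ G : ℝ → ℂ, MemLp G 2 (volume.restrict (Omega a b)) →
        ∃ (f g : ℝ → ℂ) (fa fb : Fin n → ℂ), MemDmax a b f g fa fb ∧ B.mulVec fa = fb ∧
          (fun x => mK * g x - l * f x) =ᵐ[volume.restrict (Omega a b)] G) ↔
      Function.Surjective
        (((expDiag fun i => l * (b i))⁻¹ * B * (expDiag fun i => l * (a i)) - 1).mulVec)) ∧
    ((∀ G : ℝ → ℂ, MemLp G 2 (volume.restrict (Omega a b)) →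
        ∃ (f g : ℝ → ℂ) (fa fb : Fin n → ℂ), MemDmax a b f g fa fb ∧ B.mulVec fa = fb ∧
          (fun x => mK * g x - l * f x) =ᵐ[volume.restrict (Omega a b)] G) ↔
      (∀ (f g : ℝ → ℂ) (fa fb : Fin n → ℂ), MemDmax a b f g fa fb → B.mulVec fa = fb →
        (fun x => mK * g x - l * f x) =ᵐ[volume.restrict (Omega a b)] (fun _ => 0) →
        f =ᵐ[volume.restrict (Omega a b)] fun _ => 0)) ∧
    ((∀ G : ℝ → ℂ, MemLp G 2 (volume.restrict (Omega a b)) →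
        ∃ (f g : ℝ → ℂ) (fa fb : Fin n → ℂ), MemDmax a b f g fa fb ∧ B.mulVec fa = fb ∧
          (fun x => mK * g x - l * f x) =ᵐ[volume.restrict (Omega a b)] G) ↔
      Function.Injective
        (((expDiag fun i => l * (b i))⁻¹ * B * (expDiag fun i => l * (a i)) - 1).mulVec))) := by
  classical
  set M := (expDiag fun i => l * (b i))⁻¹ * B * (expDiag fun i => l * (a i)) - 1 with hM_def
  have hG0 : MemLp (fun _ : ℝ => (0 : ℂ)) 2 (volume.restrict (Omega a b)) := MemLp.zero'
  -- matrix surjective → operator surjective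
  have hSP : Function.Surjective M.mulVec →
      (∀ G : ℝ → ℂ, MemLp G 2 (volume.restrict (Omega a b)) →
        ∃ (f g : ℝ → ℂ) (fa fb : Fin n → ℂ), MemDmax a b f g fa fb ∧ B.mulVec fa = fb ∧
          (fun x => mK * g x - l * f x) =ᵐ[volume.restrict (Omega a b)] G) := by
    intro hS G hG
    obtain ⟨c, hc⟩ := hS (dVec a b l G)
    obtain ⟨f, g, hmem, hae⟩ := exists_sol hab l hG c
    exact ⟨f, g, _, _, hmem, (matrix_bc a b B l c (dVec a b l G)).mpr hc, hae⟩
  -- operator surjective → matrix surjective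
  have hPS : (∀ G : ℝ → ℂ, MemLp G 2 (volume.restrict (Omega a b)) →
      ∃ (f g : ℝ → ℂ) (fa fb : Fin n → ℂ), MemDmax a b f g fa fb ∧ B.mulVec fa = fb ∧
        (fun x => mK * g x - l * f x) =ᵐ[volume.restrict (Omega a b)] G) →
      Function.Surjective M.mulVec := by
    intro hP v
    set Gt : ℝ → ℂ := fun t => ∑ i, (Set.Ioo (a i) (b i)).indicator
      (fun t => v i * Complex.exp (Kc * l * t) * (Kc * (((b i) : ℂ) - ((a i) : ℂ)))⁻¹) t
      with hGt_def
    have hGtmem : MemLp Gt 2 (volume.restrict (Omega a b)) :=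
      memL2_indicator_sum hab _
        (fun i => (continuous_const.mul (exp_cont _)).mul continuous_const)
    have hd : ∀ i, dVec a b l Gt i = v i := by
      intro i
      have hZ : (((b i) : ℂ) - ((a i) : ℂ)) ≠ 0 := by
        rw [← Complex.ofReal_sub]
        exact Complex.ofReal_ne_zero.mpr (sub_ne_zero.mpr (ne_of_gt (hab.1 i)))
      have hrho : ∀ t, rho a b l Gt i t
          = (Set.Ioo (a i) (b i)).indicator
              (fun _ => v i * (((b i) : ℂ) - ((a i) : ℂ))⁻¹) t := by
        intro t
        by_cases h : t ∈ Set.Ioo (a i) (b i)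
        · rw [rho, Set.indicator_of_mem h, Set.indicator_of_mem h, hGt_def]
          simp only
          rw [sum_indicator_eq hab _ h]
          have h4 : Complex.exp (Kc * l * t) * Complex.exp (-(Kc * l) * t) = 1 := by
            rw [neg_mul]; exact exp_mul_exp_neg _
          have h5 : Kc * (Kc * (((b i) : ℂ) - ((a i) : ℂ)))⁻¹
              = (((b i) : ℂ) - ((a i) : ℂ))⁻¹ := by
            rw [mul_inv, ← mul_assoc, mul_inv_cancel₀ Kc_ne, one_mul]
          linear_combination (v i * Complex.exp (Kc * l * t) * Complex.exp (-(Kc * l) * t)) * h5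
            + (v i * (((b i) : ℂ) - ((a i) : ℂ))⁻¹) * h4
        · rw [rho, Set.indicator_of_notMem h, Set.indicator_of_notMem h, mul_zero]
      rw [dVec, intervalIntegral.integral_congr
        (g := fun t => (Set.Ioo (a i) (b i)).indicator
          (fun _ => v i * (((b i) : ℂ) - ((a i) : ℂ))⁻¹) t) (fun t _ => hrho t)]
      rw [intervalIntegral.integral_of_le (hab.1 i).le,
        MeasureTheory.integral_indicator measurableSet_Ioo,
        Measure.restrict_restrict measurableSet_Ioo,
        Set.inter_eq_self_of_subset_left Set.Ioo_subset_Ioc_self,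
        MeasureTheory.setIntegral_const,
        Real.volume_real_Ioo_of_le (by linarith [hab.1 i] : a i ≤ b i),
        Complex.real_smul, Complex.ofReal_sub]
      field_simp
    obtain ⟨f, g, fa, fb, hmem, hbc, hae⟩ := hP Gt hGtmem
    have hu := sol_unique hab hGtmem hmem hae
    set c : Fin n → ℂ := fun i => Complex.exp (-(Kc * l) * (a i)) * fa i with hc_def
    have hfa_eq : (fun i => Complex.exp (Kc * l * (a i)) * c i) = fa := by
      funext i
      rw [hc_def]
      simp only
      rw [neg_mul]
      exact exp_cancel_left _ _
    have hfb_eq : fb = fun i => Complex.exp (Kc * l * (b i)) * (c i + dVec a b l Gt i) :=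
      funext fun i => (hu i).2
    have hbc2 : B.mulVec (fun i => Complex.exp (Kc * l * (a i)) * c i)
        = fun i => Complex.exp (Kc * l * (b i)) * (c i + dVec a b l Gt i) := by
      rw [hfa_eq, hbc, hfb_eq]
    refine ⟨c, ?_⟩
    rw [hM_def, (matrix_bc a b B l c (dVec a b l Gt)).mp hbc2]
    funext i
    exact hd i
  -- matrix injective → operator injective
  have hIQ : Function.Injective M.mulVec →
      (∀ (f g : ℝ → ℂ) (fa fb : Fin n → ℂ), MemDmax a b f g fa fb → B.mulVec fa = fb →
        (fun x => mK * g x - l * f x) =ᵐ[volume.restrict (Omega a b)] (fun _ => 0) →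
        f =ᵐ[volume.restrict (Omega a b)] fun _ => 0) := by
    intro hInj f g fa fb hmem hbc hae0
    have hu := sol_unique hab (G := fun _ => 0) hG0 hmem hae0
    set c : Fin n → ℂ := fun i => Complex.exp (-(Kc * l) * (a i)) * fa i with hc_def
    have hfa_eq : (fun i => Complex.exp (Kc * l * (a i)) * c i) = fa := by
      funext i
      rw [hc_def]
      simp only
      rw [neg_mul]
      exact exp_cancel_left _ _
    have hfb_eq : fb = fun i => Complex.exp (Kc * l * (b i))
        * (c i + (fun _ : Fin n => (0 : ℂ)) i) := by
      funext i
      rw [(hu i).2, dVec_zero]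
    have hbc2 : B.mulVec (fun i => Complex.exp (Kc * l * (a i)) * c i)
        = fun i => Complex.exp (Kc * l * (b i)) * (c i + (fun _ : Fin n => (0 : ℂ)) i) := by
      rw [hfa_eq, hbc, hfb_eq]
    have hMc := (matrix_bc a b B l c (fun _ => 0)).mp hbc2
    have hc0 : c = 0 := by
      apply hInj
      rw [Matrix.mulVec_zero, ← hM_def] at *
      rw [hMc]
      rfl
    filter_upwards [ae_restrict_mem measurableSet_Omega] with x hx
    obtain ⟨i, hi⟩ := Set.mem_iUnion.mp hx
    have hshape := (hu i).1 x hi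
    have hci : Complex.exp (-(Kc * l) * (a i)) * fa i = 0 := by
      have := congrFun hc0 i
      rw [hc_def] at this
      simpa using this
    rw [hshape, hci,
      intervalIntegral.integral_congr (g := fun _ => (0 : ℂ)) (fun t _ => rho_zero a b l i t)]
    simp
  -- operator injective → matrix injective
  have hQI : (∀ (f g : ℝ → ℂ) (fa fb : Fin n → ℂ), MemDmax a b f g fa fb → B.mulVec fa = fb →
      (fun x => mK * g x - l * f x) =ᵐ[volume.restrict (Omega a b)] (fun _ => 0) →
      f =ᵐ[volume.restrict (Omega a b)] fun _ => 0) →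
      Function.Injective M.mulVec := by
    intro hQ
    have hker : ∀ c : Fin n → ℂ, M.mulVec c = 0 → c = 0 := by
      intro c hc
      obtain ⟨f, g, hmem, hae⟩ := exists_sol hab l (G := fun _ => 0) hG0 c
      have hbc : B.mulVec (fun i => Complex.exp (Kc * l * (a i)) * c i)
          = fun i => Complex.exp (Kc * l * (b i)) * (c i + dVec a b l (fun _ => 0) i) := by
        refine (matrix_bc a b B l c (dVec a b l (fun _ => 0))).mpr ?_
        funext i
        rw [dVec_zero, ← hM_def]
        exact congrFun hc i
      have hf0 := hQ f g _ _ hmem hbc hae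
      funext i
      by_contra hci
      have h1 : ∀ᵐ x ∂volume.restrict (Set.Ioo (a i) (b i)), f x = 0 :=
        ae_Omega_to_Ioo hf0 i
      have hshape := (sol_unique hab (G := fun _ => 0) hG0 hmem hae i).1
      have h2 : ∀ᵐ x ∂volume.restrict (Set.Ioo (a i) (b i)), False := by
        filter_upwards [h1, ae_restrict_mem measurableSet_Ioo] with x hx hxm
        have h3 := hshape x hxm
        rw [hx, intervalIntegral.integral_congr (g := fun _ => (0 : ℂ))
          (fun t _ => rho_zero a b l i t)] at h3
        simp only [intervalIntegral.integral_zero, add_zero] at h3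
        have h5 : Complex.exp (-(Kc * l) * (a i))
            * (Complex.exp (Kc * l * (a i)) * c i) = c i := by
          rw [neg_mul]
          exact exp_cancel_left' _ _
        rw [h5] at h3
        rcases mul_eq_zero.mp h3.symm with h6 | h6
        · exact Complex.exp_ne_zero _ h6
        · exact hci h6
      have h6 := Filter.eventually_false_iff_eq_bot.mp h2
      rw [MeasureTheory.ae_eq_bot, Measure.restrict_eq_zero, Real.volume_Ioo] at h6
      rw [ENNReal.ofReal_eq_zero] at h6
      linarith [hab.1 i]
    intro u w huw
    have h7 : M.mulVec (u - w) = 0 := by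
      rw [Matrix.mulVec_sub, huw, sub_self]
    exact sub_eq_zero.mp (hker _ h7)
  exact ⟨⟨hPS, hSP⟩,
    ⟨fun hP => hIQ ((surj_iff_inj M).mp (hPS hP)),
     fun hQ => hSP ((surj_iff_inj M).mpr (hQI hQ))⟩,
    ⟨fun hP => (surj_iff_inj M).mp (hPS hP),
     fun hI => hSP ((surj_iff_inj M).mpr hI)⟩⟩
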